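/- Let V be a module over ZMod 2, let τ : V ⊗ V → V ⊗ V be the flip determined by x ⊗ y ↦ y ⊗ x, and let N = id + τ. Then LinearMap.ker N = LinearMap.range N ⊔ Submodule.span (ZMod 2) {x ⊗ x : x ∈ V}, i.e. every symmetric tensor is a sum of a norm element (1 + τ)(z) and of pure squares x ⊗ x. (This is the exactness, in characteristic 2, of the four-term sequence 0 → Γ² → Γ¹⊗Γ¹ →^{1+τ} Γ¹⊗Γ¹ → S² → 0 of functors on F₂-vector spaces at the first middle spot, the symmetric tensors ker(1 + τ) being Γ²(V).) -/
import Mathlib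

open TensorProduct

theorem symmetric_tensors_char_two (V : Type*) [AddCommGroup V] [Module (ZMod 2) V] :
    (LinearMap.ker
        (LinearMap.id + (TensorProduct.comm (ZMod 2) V V).toLinearMap) :
      Submodule (ZMod 2) (V ⊗[ZMod 2] V)) =
      LinearMap.range (LinearMap.id + (TensorProduct.comm (ZMod 2) V V).toLinearMap) ⊔
        Submodule.span (ZMod 2) {z : V ⊗[ZMod 2] V | ∃ x : V, z = x ⊗ₜ[ZMod 2] x} := by
  classical
  set τ := (TensorProduct.comm (ZMod 2) V V).toLinearMap with hτdef
  have h2 : ∀ x : V ⊗[ZMod 2] V, x + x = 0 := by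
    intro x
    have : ((2 : ZMod 2)) • x = x + x := two_smul _ x
    rw [← this, show (2 : ZMod 2) = 0 from rfl, zero_smul]
  have hττ : ∀ x, τ (τ x) = x := by
    intro x
    induction x using TensorProduct.induction_on with
    | zero => simp
    | tmul a b => simp [hτdef]
    | add a b ha hb => simp [map_add, ha, hb]
  apply le_antisymm
  · intro t ht
    rw [LinearMap.mem_ker, LinearMap.add_apply, LinearMap.id_apply] at ht
    have hsym : τ t = t := by
      have h1 : τ t = -t := by
        have := neg_eq_of_add_eq_zero_right ht
        rw [← this]
      rw [h1, neg_eq_of_add_eq_zero_right (h2 t)]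
    letI : LinearOrder (Module.Free.ChooseBasisIndex (ZMod 2) V) :=
      IsWellOrder.linearOrder WellOrderingRel
    set ι := Module.Free.ChooseBasisIndex (ZMod 2) V
    set b := Module.Free.chooseBasis (ZMod 2) V with hb
    set c := b.tensorProduct b with hc
    set f := c.repr t with hfdef
    have hτc : ∀ p : ι × ι, τ (c p) = c (p.2, p.1) := by
      rintro ⟨k, l⟩
      simp [hc, Module.Basis.tensorProduct_apply, hτdef]
    -- symmetry of coefficients
    have hsymf : ∀ i j : ι, f (i, j) = f (j, i) := by
      have key : ∀ i j : ι,
          (Finsupp.lapply (i, j) ∘ₗ (c.repr.toLinearMap ∘ₗ τ) :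
            V ⊗[ZMod 2] V →ₗ[ZMod 2] ZMod 2) =
          Finsupp.lapply (j, i) ∘ₗ c.repr.toLinearMap := by
        intro i j
        apply c.ext
        rintro ⟨k, l⟩
        simp only [LinearMap.comp_apply, LinearEquiv.coe_coe, hτc ⟨k, l⟩,
          Module.Basis.repr_self, Finsupp.lapply_apply, Finsupp.single_apply]
        by_cases h1 : l = i <;> by_cases h2 : k = j <;>
          simp [Prod.ext_iff, h1, h2]
      intro i j
      have := congrArg (fun g => g t) (key i j)
      simp only [LinearMap.comp_apply, LinearEquiv.coe_coe, Finsupp.lapply_apply,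
        hsym] at this
      exact this
    -- decomposition of t as a sum over the support
    have ht' : ∑ p ∈ f.support, f p • c p = t := by
      conv_rhs => rw [← c.linearCombination_repr t]
      rw [Finsupp.linearCombination_apply, Finsupp.sum, ← hfdef]
    set S := f.support with hS
    set U := S.filter (fun p => p.1 < p.2) with hU
    set L := S.filter (fun p => p.2 < p.1) with hL
    set D := S.filter (fun p => p.1 = p.2) with hD
    have hsplit : ∑ p ∈ S, f p • c p =
        (∑ p ∈ U, f p • c p + ∑ p ∈ L, f p • c p) + ∑ p ∈ D, f p • c p := by
      rw [← Finset.sum_filter_add_sum_filter_not S (fun p => p.1 < p.2)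
        (fun p => f p • c p)]
      rw [← Finset.sum_filter_add_sum_filter_not
        (S.filter fun p => ¬ p.1 < p.2) (fun p => p.2 < p.1) (fun p => f p • c p)]
      have e1 : (S.filter fun p => ¬ p.1 < p.2).filter (fun p => p.2 < p.1) = L := by
        rw [Finset.filter_filter, hL]
        apply Finset.filter_congr
        intro p _
        constructor
        · rintro ⟨_, h⟩; exact h
        · intro h; exact ⟨lt_asymm h, h⟩
      have e2 : (S.filter fun p => ¬ p.1 < p.2).filter (fun p => ¬ p.2 < p.1) = D := by
        rw [Finset.filter_filter, hD]
        apply Finset.filter_congr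
        intro p _
        constructor
        · rintro ⟨h1, h2⟩; exact le_antisymm (not_lt.mp h2) (not_lt.mp h1)
        · intro h; exact ⟨by rw [h]; exact lt_irrefl _, by rw [h]; exact lt_irrefl _⟩
      rw [e1, e2, add_assoc]
    have hLU : ∑ p ∈ L, f p • c p = ∑ p ∈ U, f p • c (p.2, p.1) := by
      apply Finset.sum_nbij' (fun p => (p.2, p.1)) (fun p => (p.2, p.1))
      · rintro ⟨k, l⟩ hkl
        rw [hL, Finset.mem_filter] at hkl
        rw [hU, Finset.mem_filter]
        refine ⟨?_, hkl.2⟩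
        rw [hS, Finsupp.mem_support_iff] at hkl ⊢
        rw [hsymf]
        exact hkl.1
      · rintro ⟨k, l⟩ hkl
        rw [hU, Finset.mem_filter] at hkl
        rw [hL, Finset.mem_filter]
        refine ⟨?_, hkl.2⟩
        rw [hS, Finsupp.mem_support_iff] at hkl ⊢
        rw [hsymf]
        exact hkl.1
      · rintro ⟨k, l⟩ _; rfl
      · rintro ⟨k, l⟩ _; rfl
      · rintro ⟨k, l⟩ _
        simp only
        rw [hsymf k l]
    set w := ∑ p ∈ U, f p • c p with hw
    set N := (LinearMap.id + τ : V ⊗[ZMod 2] V →ₗ[ZMod 2] V ⊗[ZMod 2] V) with hN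
    have hNw : N w = ∑ p ∈ U, f p • c p + ∑ p ∈ L, f p • c p := by
      rw [hN, LinearMap.add_apply, LinearMap.id_apply, hLU, hw, map_sum]
      congr 1
      apply Finset.sum_congr rfl
      intro p _
      rw [map_smul, hτc]
    have hDmem : ∑ p ∈ D, f p • c p ∈
        Submodule.span (ZMod 2) {z : V ⊗[ZMod 2] V | ∃ x : V, z = x ⊗ₜ[ZMod 2] x} := by
      apply Submodule.sum_mem
      intro p hp
      rw [hD, Finset.mem_filter] at hp
      apply Submodule.smul_mem
      apply Submodule.subset_span
      refine ⟨b p.1, ?_⟩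
      have : c p = b p.1 ⊗ₜ[ZMod 2] b p.2 := by
        rw [hc]
        obtain ⟨k, l⟩ := p
        exact Module.Basis.tensorProduct_apply b b k l
      rw [this, hp.2]
    rw [Submodule.mem_sup]
    exact ⟨N w, ⟨w, rfl⟩, ∑ p ∈ D, f p • c p, hDmem, by rw [hNw, ← ht', hsplit]⟩
  · apply sup_le
    · rintro z ⟨v, rfl⟩
      rw [LinearMap.mem_ker]
      simp only [LinearMap.add_apply, LinearMap.id_apply, map_add, hττ]
      have : v + τ v + (τ v + v) = (v + τ v) + (v + τ v) := by
        rw [add_comm (τ v) v]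
      rw [this, h2]
    · rw [Submodule.span_le]
      rintro z ⟨x, rfl⟩
      rw [SetLike.mem_coe, LinearMap.mem_ker, LinearMap.add_apply, LinearMap.id_apply]
      have : τ (x ⊗ₜ[ZMod 2] x) = x ⊗ₜ[ZMod 2] x := by simp [hτdef]
      rw [this, h2]
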